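/- Let R(z) = (1 - p1*q2*z)^2 * (1 - p3*z^2) - 4*p2*q1*q2*q3*z^3 with p1, p2, p3 ∈ (0,1), q_i = 1 - p_i. Then R(1/(p1*q2)) < 0, and hence R has a positive real root strictly less than 1/(p1*q2). -/

import Mathlib

/-- `R(1/(p1*q2)) < 0`, hence `R` has a positive real root
strictly less than `1/(p1*q2)`. -/
theorem R_root_lt_inv_p1q2
    (p1 p2 p3 q1 q2 q3 : ℝ)
    (hp1 : p1 ∈ Set.Ioo (0:ℝ) 1) (hp2 : p2 ∈ Set.Ioo (0:ℝ) 1) (hp3 : p3 ∈ Set.Ioo (0:ℝ) 1)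
    (hq1 : q1 = 1 - p1) (hq2 : q2 = 1 - p2) (hq3 : q3 = 1 - p3)
    (R : ℝ → ℝ)
    (hR : ∀ z, R z = (1 - p1*q2*z)^2 * (1 - p3*z^2) - 4*p2*q1*q2*q3*z^3) :
    R (1/(p1*q2)) < 0 ∧ ∃ z : ℝ, 0 < z ∧ z < 1/(p1*q2) ∧ R z = 0 := by
  obtain ⟨hp1a, hp1b⟩ := hp1
  obtain ⟨hp2a, hp2b⟩ := hp2
  obtain ⟨hp3a, hp3b⟩ := hp3
  have hq1' : 0 < q1 := by simp [hq1]; linarith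
  have hq2' : 0 < q2 := by simp [hq2]; linarith
  have hq3' : 0 < q3 := by simp [hq3]; linarith
  have hpq : 0 < p1 * q2 := mul_pos hp1a hq2'
  set z0 : ℝ := 1/(p1*q2) with hz0
  have hz0pos : 0 < z0 := by positivity
  have hcancel : 1 - p1*q2*z0 = 0 := by
    rw [hz0, mul_one_div_cancel hpq.ne']; ring
  have hneg : R z0 < 0 := by
    rw [hR, hcancel]
    have : (0:ℝ)^2 * (1 - p3*z0^2) = 0 := by ring
    rw [this]
    have : 0 < 4*p2*q1*q2*q3*z0^3 := by positivity
    linarith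
  refine ⟨hneg, ?_⟩
  have hcont : ContinuousOn R (Set.Icc 0 z0) := by
    have : Continuous R := by
      have : R = fun z => (1 - p1*q2*z)^2 * (1 - p3*z^2) - 4*p2*q1*q2*q3*z^3 := funext hR
      rw [this]; continuity
    exact this.continuousOn
  have hR0 : R 0 = 1 := by rw [hR]; ring
  have := intermediate_value_Ioo (le_of_lt hz0pos) hcont (a := 0) (b := z0)
  have hmem : (0:ℝ) ∈ Set.Ioo (R z0) (R 0) := by
    constructor <;> simp [hR0, hneg]
  have hsub : (0:ℝ) ∈ R '' Set.Ioo 0 z0 := by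
    have h2 := intermediate_value_Ioo' (le_of_lt hz0pos) hcont
    exact h2 ⟨hneg, by rw [hR0]; norm_num⟩
  obtain ⟨z, hz, hz0'⟩ := hsub
  exact ⟨z, hz.1, hz.2, hz0'⟩
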